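/- Let n ≥ 3, and let C_n denote the set of distinct cubic MRS functions in n variables, i.e., the set of Boolean functions of the form (1,j,k) for 1 < j < k ≤ n. If n ≡ 0 (mod 3), then |C_n| = (n² − 3n + 6)/6; otherwise |C_n| = (n² − 3n + 2)/6. -/
import Mathlib


/-- Boolean functions in `n` variables, with variables indexed by `ZMod n`
(index `i : ZMod n` corresponds to the variable `x_{i+1}` in 1-indexed notation,
so that "`a Mod n`" arithmetic on subscripts becomes arithmetic in `ZMod n`). -/
abbrev BF (n : ℕ) := (ZMod n → ZMod 2) → ZMod 2

/-- The cubic MRS function `(1,j,k)` in `n` variables: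
`x ↦ Σ_{i=1}^n x_i x_{(i+j-1) Mod n} x_{(i+k-1) Mod n}`, the sum taken in `GF(2)`. -/
def cubicMRS (n : ℕ) [NeZero n] (j k : ℕ) : BF n :=
  fun x => ∑ i : ZMod n,
    x i * x (i + ((j - 1 : ℕ) : ZMod n)) * x (i + ((k - 1 : ℕ) : ZMod n))

/-- `C_n`: the set of all cubic MRS functions `(1,j,k)`, `1 < j < k ≤ n`, in `n` variables. -/
def cubicSet (n : ℕ) [NeZero n] : Set (BF n) :=
  {f | ∃ j k : ℕ, 1 < j ∧ j < k ∧ k ≤ n ∧ f = cubicMRS n j k}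


section aux
variable (n : ℕ) [NeZero n]
set_option linter.unusedSectionVars false

def shiftS (S : Finset (ZMod n)) (t : ZMod n) : Finset (ZMod n) := S.image (· + t)

def gfun (S : Finset (ZMod n)) : BF n := fun x => ∑ i : ZMod n, ∏ s ∈ S, x (i + s)

variable {n}

lemma shiftS_shiftS (S : Finset (ZMod n)) (a b : ZMod n) :
    shiftS n (shiftS n S a) b = shiftS n S (a + b) := by
  simp only [shiftS, Finset.image_image]
  congr 1
  funext s
  simp [add_assoc]

lemma shiftS_zero (S : Finset (ZMod n)) : shiftS n S 0 = S := by
  simp [shiftS]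

lemma card_shiftS (S : Finset (ZMod n)) (t : ZMod n) : (shiftS n S t).card = S.card :=
  Finset.card_image_of_injective _ (add_left_injective t)

lemma gfun_shiftS (S : Finset (ZMod n)) (t : ZMod n) : gfun n (shiftS n S t) = gfun n S := by
  funext x
  unfold gfun shiftS
  have h1 : ∀ i : ZMod n, (∏ s ∈ S.image (· + t), x (i + s)) = ∏ s ∈ S, x ((i + t) + s) := by
    intro i
    rw [Finset.prod_image (by intro a _ b _ h; exact add_left_injective t h)]
    apply Finset.prod_congr rfl
    intro s _
    ring_nf
  simp only [h1]
  exact Equiv.sum_comp (Equiv.addRight t) (fun i => ∏ s ∈ S, x (i + s))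

def ind (S' : Finset (ZMod n)) : ZMod n → ZMod 2 := fun v => if v ∈ S' then 1 else 0

lemma gfun_ind (S S' : Finset (ZMod n)) (h : S.card = S'.card) :
    gfun n S (ind S') =
      ((Finset.univ.filter (fun t => shiftS n S t = S')).card : ZMod 2) := by
  unfold gfun
  have key : ∀ i : ZMod n, (∏ s ∈ S, ind S' (i + s)) = if shiftS n S i = S' then 1 else 0 := by
    intro i
    by_cases hc : shiftS n S i = S'
    · rw [if_pos hc]
      apply Finset.prod_eq_one
      intro s hs
      have : i + s ∈ S' := by
        rw [← hc]
        exact Finset.mem_image.2 ⟨s, hs, by ring⟩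
      simp [ind, this]
    · rw [if_neg hc]
      have hsub : ¬ (shiftS n S i ⊆ S') := by
        intro hsub
        exact hc (Finset.eq_of_subset_of_card_le hsub (by rw [card_shiftS, h]))
      obtain ⟨v, hv, hv'⟩ := Finset.not_subset.1 hsub
      obtain ⟨s, hs, rfl⟩ := Finset.mem_image.1 hv
      refine Finset.prod_eq_zero hs ?_
      simp only [ind]
      rw [add_comm i s]
      simp [hv']
  simp only [key]
  rw [Finset.sum_boole]

lemma stab_no_two (S' : Finset (ZMod n)) (h3 : S'.card = 3) {h : ZMod n}
    (hsh : shiftS n S' h = S') (hh : h ≠ 0) (h2 : h + h = 0) : False := by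
  have hmem : ∀ p ∈ S', p + h ∈ S' := by
    intro p hp
    rw [← hsh]
    exact Finset.mem_image.2 ⟨p, hp, rfl⟩
  have hpos : 0 < S'.card := by omega
  obtain ⟨p, hp⟩ := Finset.card_pos.1 hpos
  have hph := hmem p hp
  have hne1 : p + h ≠ p := fun hq => hh (by linear_combination hq)
  have hq : ∃ q ∈ S', q ∉ ({p, p + h} : Finset (ZMod n)) := by
    by_contra hq
    push_neg at hq
    have h1 := Finset.card_le_card (fun v hv => hq v hv)
    have h2' : ({p, p + h} : Finset (ZMod n)).card ≤ 2 :=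
      le_trans (Finset.card_insert_le _ _) (by simp)
    omega
  obtain ⟨q, hqS, hqn⟩ := hq
  simp only [Finset.mem_insert, Finset.mem_singleton, not_or] at hqn
  have hqh := hmem q hqS
  have hc1 : ({p, p + h, q} : Finset (ZMod n)).card = 3 := by
    rw [Finset.card_insert_of_notMem, Finset.card_insert_of_notMem, Finset.card_singleton]
    · simp only [Finset.mem_singleton]
      exact fun e => hqn.2 e.symm
    · simp only [Finset.mem_insert, Finset.mem_singleton, not_or]
      exact ⟨Ne.symm hne1, fun e => hqn.1 e.symm⟩
  have hSeq : S' = {p, p + h, q} := by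
    symm
    apply Finset.eq_of_subset_of_card_le
    · intro v hv
      rcases Finset.mem_insert.1 hv with rfl | hv2
      · exact hp
      rcases Finset.mem_insert.1 hv2 with rfl | hv3
      · exact hph
      rw [Finset.mem_singleton] at hv3
      exact hv3 ▸ hqS
    · omega
  rw [hSeq] at hqh
  simp only [Finset.mem_insert, Finset.mem_singleton] at hqh
  rcases hqh with h' | h' | h'
  · exact hqn.2 (by linear_combination h' - h2)
  · exact hqn.1 (by linear_combination h')
  · exact hh (by linear_combination h')

lemma T_card (S S' : Finset (ZMod n)) (hS : S.card = 3) (hS' : S'.card = 3)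
    (hne : (Finset.univ.filter (fun t => shiftS n S t = S')).Nonempty) :
    (Finset.univ.filter (fun t => shiftS n S t = S')).card = 1 ∨
    (Finset.univ.filter (fun t => shiftS n S t = S')).card = 3 := by
  set T := Finset.univ.filter (fun t => shiftS n S t = S') with hT
  have hmemT : ∀ t, t ∈ T ↔ shiftS n S t = S' := by
    intro t; simp [hT]
  obtain ⟨s₀, hs₀⟩ := Finset.card_pos.1 (show 0 < S.card by omega)
  have hTsub : T ⊆ S'.image (fun v => v - s₀) := by
    intro t ht
    rw [hmemT] at ht
    have : s₀ + t ∈ S' := by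
      rw [← ht]; exact Finset.mem_image.2 ⟨s₀, hs₀, rfl⟩
    exact Finset.mem_image.2 ⟨s₀ + t, this, by ring⟩
  have hT3 : T.card ≤ 3 := le_trans (Finset.card_le_card hTsub)
    (le_trans (Finset.card_image_le) (by omega))
  by_cases h1 : T.card ≤ 1
  · left
    have := Finset.card_pos.2 hne
    omega
  · right
    push_neg at h1
    obtain ⟨a, ha, b, hb, hab⟩ := Finset.one_lt_card.1 h1
    rw [hmemT] at ha hb
    set h := b - a with hh'
    have hshift : shiftS n S' h = S' := by
      have e1 : a + h = b := by ring
      calc shiftS n S' h = shiftS n (shiftS n S a) h := by rw [ha]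
        _ = shiftS n S (a + h) := shiftS_shiftS S a h
        _ = S' := by rw [e1, hb]
    have hh0 : h ≠ 0 := fun e => hab (by linear_combination -e)
    have h2h : h + h ≠ 0 := fun e => stab_no_two S' hS' hshift hh0 e
    have hmem2 : a + h + h ∈ T := by
      rw [hmemT, ← shiftS_shiftS, ← shiftS_shiftS, ha, hshift, hshift]
    have hbT : b ∈ T := by rw [hmemT]; exact hb
    have hsub3 : ({a, b, a + h + h} : Finset (ZMod n)) ⊆ T := by
      intro v hv
      rcases Finset.mem_insert.1 hv with rfl | hv2
      · exact Finset.mem_filter.2 ⟨Finset.mem_univ _, ha⟩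
      rcases Finset.mem_insert.1 hv2 with rfl | hv3
      · exact hbT
      rw [Finset.mem_singleton] at hv3
      exact hv3 ▸ hmem2
    have hcard3 : ({a, b, a + h + h} : Finset (ZMod n)).card = 3 := by
      rw [Finset.card_insert_of_notMem, Finset.card_insert_of_notMem, Finset.card_singleton]
      · simp only [Finset.mem_singleton]
        intro e
        exact hab (by linear_combination e)
      · simp only [Finset.mem_insert, Finset.mem_singleton, not_or]
        exact ⟨hab, fun e => h2h (by linear_combination -e)⟩
    have := Finset.card_le_card hsub3
    omega

lemma gfun_eq_iff (S S' : Finset (ZMod n)) (hS : S.card = 3) (hS' : S'.card = 3) :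
    gfun n S = gfun n S' ↔ ∃ t, shiftS n S t = S' := by
  constructor
  · intro hf
    have hT' : (Finset.univ.filter (fun t => shiftS n S' t = S')).Nonempty :=
      ⟨0, Finset.mem_filter.2 ⟨Finset.mem_univ _, shiftS_zero S'⟩⟩
    have h1 : gfun n S' (ind S') = 1 := by
      rw [gfun_ind S' S' rfl]
      rcases T_card S' S' hS' hS' hT' with h | h <;> rw [h] <;> decide
    rw [← hf, gfun_ind S S' (by omega)] at h1
    have hne : (Finset.univ.filter (fun t => shiftS n S t = S')).Nonempty := by
      rw [Finset.nonempty_iff_ne_empty]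
      intro he
      rw [he] at h1
      simp at h1
    obtain ⟨t, ht⟩ := hne
    exact ⟨t, (Finset.mem_filter.1 ht).2⟩
  · rintro ⟨t, ht⟩
    rw [← ht, gfun_shiftS]

section pairs
variable {n : ℕ} [NeZero n]

def Sjk (n : ℕ) [NeZero n] (j k : ℕ) : Finset (ZMod n) :=
  {0, ((j - 1 : ℕ) : ZMod n), ((k - 1 : ℕ) : ZMod n)}

lemma natCast_inj' {a b : ℕ} (ha : a < n) (hb : b < n) (h : (a : ZMod n) = b) : a = b := by
  have := congrArg ZMod.val h
  rwa [ZMod.val_natCast_of_lt ha, ZMod.val_natCast_of_lt hb] at this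

lemma neg_natCast {m : ℕ} (hm : m ≤ n) :
    -((m : ℕ) : ZMod n) = ((n - m : ℕ) : ZMod n) := by
  rw [Nat.cast_sub hm, ZMod.natCast_self, zero_sub]

lemma cast_ne_zero' {m : ℕ} (h1 : m ≠ 0) (h2 : m < n) : ((m : ℕ) : ZMod n) ≠ 0 := by
  intro e
  exact h1 (natCast_inj' h2 (Nat.pos_of_ne_zero (NeZero.ne n)) (by rw [e, Nat.cast_zero]))

lemma card_Sjk (hn : 3 ≤ n) {j k : ℕ} (h : 2 ≤ j ∧ j < k ∧ k ≤ n) : (Sjk n j k).card = 3 := by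
  obtain ⟨h1, h2, h3⟩ := h
  have d1 : ((j - 1 : ℕ) : ZMod n) ≠ 0 := cast_ne_zero' (by omega) (by omega)
  have d2 : ((k - 1 : ℕ) : ZMod n) ≠ 0 := cast_ne_zero' (by omega) (by omega)
  have d3 : ((j - 1 : ℕ) : ZMod n) ≠ ((k - 1 : ℕ) : ZMod n) := by
    intro e
    have := natCast_inj' (show j - 1 < n by omega) (show k - 1 < n by omega) e
    omega
  rw [Sjk, Finset.card_insert_of_notMem, Finset.card_insert_of_notMem, Finset.card_singleton]
  · simpa using d3
  · simp only [Finset.mem_insert, Finset.mem_singleton, not_or]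
    exact ⟨Ne.symm d1, Ne.symm d2⟩

lemma cubic_eq_gfun (hn : 3 ≤ n) {j k : ℕ} (h : 2 ≤ j ∧ j < k ∧ k ≤ n) :
    cubicMRS n j k = gfun n (Sjk n j k) := by
  obtain ⟨h1, h2, h3⟩ := h
  have d1 : ((j - 1 : ℕ) : ZMod n) ≠ 0 := cast_ne_zero' (by omega) (by omega)
  have d2 : ((k - 1 : ℕ) : ZMod n) ≠ 0 := cast_ne_zero' (by omega) (by omega)
  have d3 : ((j - 1 : ℕ) : ZMod n) ≠ ((k - 1 : ℕ) : ZMod n) := by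
    intro e
    have := natCast_inj' (show j - 1 < n by omega) (show k - 1 < n by omega) e
    omega
  funext x
  unfold cubicMRS gfun Sjk
  apply Finset.sum_congr rfl
  intro i _
  rw [Finset.prod_insert, Finset.prod_insert, Finset.prod_singleton]
  · rw [add_zero]; ring
  · simpa using d3
  · simp only [Finset.mem_insert, Finset.mem_singleton, not_or]
    exact ⟨Ne.symm d1, Ne.symm d2⟩

lemma shiftS_triple (a b t : ZMod n) :
    shiftS n {0, a, b} t = {t, a + t, b + t} := by
  simp [shiftS, Finset.image_insert, Finset.image_singleton, zero_add]

lemma orbitB (hn : 3 ≤ n) {j k : ℕ} (h : 2 ≤ j ∧ j < k ∧ k ≤ n) :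
    shiftS n (Sjk n j k) (-((j - 1 : ℕ) : ZMod n)) = Sjk n (k - j + 1) (n - j + 2) := by
  obtain ⟨h1, h2, h3⟩ := h
  have e1 : (-((j - 1 : ℕ) : ZMod n)) = ((n - j + 1 : ℕ) : ZMod n) := by
    rw [neg_natCast (show j - 1 ≤ n by omega)]
    congr 1
    omega
  have e2 : ((j - 1 : ℕ) : ZMod n) + -((j - 1 : ℕ) : ZMod n) = 0 := by ring
  have e3 : ((k - 1 : ℕ) : ZMod n) + -((j - 1 : ℕ) : ZMod n) = ((k - j : ℕ) : ZMod n) := by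
    rw [show k - j = (k - 1) - (j - 1) by omega, Nat.cast_sub (show j - 1 ≤ k - 1 by omega)]
    ring
  rw [Sjk, shiftS_triple, e2, e3, e1, Sjk]
  rw [show k - j + 1 - 1 = k - j by omega, show n - j + 2 - 1 = n - j + 1 by omega]
  ext v
  simp only [Finset.mem_insert, Finset.mem_singleton]
  tauto

lemma orbitC (hn : 3 ≤ n) {j k : ℕ} (h : 2 ≤ j ∧ j < k ∧ k ≤ n) :
    shiftS n (Sjk n j k) (-((k - 1 : ℕ) : ZMod n)) = Sjk n (n - k + 2) (n - k + j + 1) := by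
  obtain ⟨h1, h2, h3⟩ := h
  have e1 : (-((k - 1 : ℕ) : ZMod n)) = ((n - k + 1 : ℕ) : ZMod n) := by
    rw [neg_natCast (show k - 1 ≤ n by omega)]
    congr 1
    omega
  have e2 : ((k - 1 : ℕ) : ZMod n) + -((k - 1 : ℕ) : ZMod n) = 0 := by ring
  have e3 : ((j - 1 : ℕ) : ZMod n) + -((k - 1 : ℕ) : ZMod n) = ((n - k + j : ℕ) : ZMod n) := by
    rw [show ((j - 1 : ℕ) : ZMod n) + -((k - 1 : ℕ) : ZMod n)
          = -(((k - 1 : ℕ) : ZMod n) - ((j - 1 : ℕ) : ZMod n)) by ring,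
      ← Nat.cast_sub (show j - 1 ≤ k - 1 by omega),
      show (k - 1) - (j - 1) = k - j by omega,
      neg_natCast (show k - j ≤ n by omega)]
    congr 1
    omega
  rw [Sjk, shiftS_triple, e2, e3, e1, Sjk]
  rw [show n - k + 2 - 1 = n - k + 1 by omega, show n - k + j + 1 - 1 = n - k + j by omega]
  ext v
  simp only [Finset.mem_insert, Finset.mem_singleton]
  tauto

lemma mem_Sjk_elim (hn : 3 ≤ n) {j k : ℕ} (h : 2 ≤ j ∧ j < k ∧ k ≤ n) {v : ℕ} (hv : v < n)
    (hm : ((v : ℕ) : ZMod n) ∈ Sjk n j k) : v = 0 ∨ v = j - 1 ∨ v = k - 1 := by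
  obtain ⟨h1, h2, h3⟩ := h
  simp only [Sjk, Finset.mem_insert, Finset.mem_singleton] at hm
  rcases hm with e | e | e
  · left
    exact natCast_inj' hv (Nat.pos_of_ne_zero (NeZero.ne n)) (by rw [e, Nat.cast_zero])
  · right; left
    exact natCast_inj' hv (by omega) e
  · right; right
    exact natCast_inj' hv (by omega) e

lemma Sjk_inj (hn : 3 ≤ n) {j k j' k' : ℕ} (h : 2 ≤ j ∧ j < k ∧ k ≤ n)
    (h' : 2 ≤ j' ∧ j' < k' ∧ k' ≤ n) (he : Sjk n j k = Sjk n j' k') : j = j' ∧ k = k' := by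
  have m1 : ((j' - 1 : ℕ) : ZMod n) ∈ Sjk n j k := by
    rw [he]; simp [Sjk]
  have m2 : ((k' - 1 : ℕ) : ZMod n) ∈ Sjk n j k := by
    rw [he]; simp [Sjk]
  have m3 : ((j - 1 : ℕ) : ZMod n) ∈ Sjk n j' k' := by
    rw [← he]; simp [Sjk]
  have m4 : ((k - 1 : ℕ) : ZMod n) ∈ Sjk n j' k' := by
    rw [← he]; simp [Sjk]
  have c1 := mem_Sjk_elim hn h (show j' - 1 < n by omega) m1
  have c2 := mem_Sjk_elim hn h (show k' - 1 < n by omega) m2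
  have c3 := mem_Sjk_elim hn h' (show j - 1 < n by omega) m3
  have c4 := mem_Sjk_elim hn h' (show k - 1 < n by omega) m4
  omega

def rho (n : ℕ) (p : ℕ × ℕ) : ℕ × ℕ := (p.2 - p.1 + 1, n - p.1 + 2)

lemma F_eq_iff (hn : 3 ≤ n) {j k j' k' : ℕ} (h : 2 ≤ j ∧ j < k ∧ k ≤ n)
    (h' : 2 ≤ j' ∧ j' < k' ∧ k' ≤ n) :
    cubicMRS n j k = cubicMRS n j' k' ↔
      ((j', k') = (j, k) ∨ (j', k') = rho n (j, k) ∨ (j', k') = rho n (rho n (j, k))) := by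
  have hr1 : rho n (j, k) = (k - j + 1, n - j + 2) := rfl
  have hr2 : rho n (rho n (j, k)) = (n - k + 2, n - k + j + 1) := by
    simp only [rho, Prod.mk.injEq]
    constructor <;> omega
  rw [cubic_eq_gfun hn h, cubic_eq_gfun hn h',
    gfun_eq_iff _ _ (card_Sjk hn h) (card_Sjk hn h'), hr2, hr1]
  constructor
  · rintro ⟨t, ht⟩
    have h0 : (0 : ZMod n) ∈ shiftS n (Sjk n j k) t := by
      rw [ht]; simp [Sjk]
    obtain ⟨s, hs, hst⟩ := Finset.mem_image.1 h0
    simp only [Sjk, Finset.mem_insert, Finset.mem_singleton] at hs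
    have htv : t = 0 ∨ t = -((j - 1 : ℕ) : ZMod n) ∨ t = -((k - 1 : ℕ) : ZMod n) := by
      rcases hs with rfl | rfl | rfl
      · left; linear_combination hst
      · right; left; linear_combination hst
      · right; right; linear_combination hst
    rcases htv with rfl | rfl | rfl
    · left
      rw [shiftS_zero] at ht
      have := Sjk_inj hn h h' ht
      simp [Prod.ext_iff]; omega
    · right; left
      rw [orbitB hn h] at ht
      have := Sjk_inj hn (by omega) h' ht
      simp [Prod.ext_iff]; omega
    · right; right
      rw [orbitC hn h] at ht
      have := Sjk_inj hn (by omega) h' ht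
      simp [Prod.ext_iff]; omega
  · rintro (he | he | he) <;> rw [Prod.ext_iff] at he <;> simp only at he <;>
      obtain ⟨rfl, rfl⟩ := he
    · exact ⟨0, shiftS_zero _⟩
    · exact ⟨_, orbitB hn h⟩
    · exact ⟨_, orbitC hn h⟩

end pairs
end aux

section count
variable {n : ℕ} [NeZero n]

def Pfin (n : ℕ) : Finset (ℕ × ℕ) :=
  (Finset.range (n + 1) ×ˢ Finset.range (n + 1)).filter
    (fun p => 2 ≤ p.1 ∧ p.1 < p.2 ∧ p.2 ≤ n)

lemma mem_Pfin {p : ℕ × ℕ} : p ∈ Pfin n ↔ 2 ≤ p.1 ∧ p.1 < p.2 ∧ p.2 ≤ n := by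
  simp only [Pfin, Finset.mem_filter, Finset.mem_product, Finset.mem_range]
  omega

lemma two_mul_card_Pfin (hn : 3 ≤ n) : 2 * (Pfin n).card = (n - 1) * (n - 2) := by
  classical
  set U : Finset (ℕ × ℕ) := Finset.Icc 2 n ×ˢ Finset.Icc 2 n with hU
  have hmemU : ∀ p : ℕ × ℕ, p ∈ U ↔ (2 ≤ p.1 ∧ p.1 ≤ n) ∧ 2 ≤ p.2 ∧ p.2 ≤ n := by
    intro p
    simp [hU, Finset.mem_product]
  have hP : Pfin n = U.filter (fun p => p.1 < p.2) := by
    ext p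
    rw [mem_Pfin, Finset.mem_filter, hmemU]
    omega
  have hcardU : U.card = (n - 1) * (n - 1) := by
    rw [hU, Finset.card_product, Nat.card_Icc]
    congr 1 <;> omega
  have hsplit1 := Finset.card_filter_add_card_filter_not
    (s := U) (p := fun p : ℕ × ℕ => p.1 < p.2)
  have hsplit2 := Finset.card_filter_add_card_filter_not
    (s := U.filter (fun p : ℕ × ℕ => ¬ p.1 < p.2)) (p := fun p : ℕ × ℕ => p.1 = p.2)
  have hD : ((U.filter (fun p : ℕ × ℕ => ¬ p.1 < p.2)).filter (fun p : ℕ × ℕ => p.1 = p.2))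
      = U.filter (fun p : ℕ × ℕ => p.1 = p.2) := by
    rw [Finset.filter_filter]
    apply Finset.filter_congr
    intro p _
    constructor
    · exact fun h => h.2
    · exact fun h => ⟨by omega, h⟩
  have hG : ((U.filter (fun p : ℕ × ℕ => ¬ p.1 < p.2)).filter (fun p : ℕ × ℕ => ¬ p.1 = p.2))
      = U.filter (fun p : ℕ × ℕ => p.2 < p.1) := by
    rw [Finset.filter_filter]
    apply Finset.filter_congr
    intro p _
    constructor
    · exact fun h => by omega
    · exact fun h => by omega
  have hcardD : (U.filter (fun p : ℕ × ℕ => p.1 = p.2)).card = n - 1 := by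
    rw [show (U.filter (fun p : ℕ × ℕ => p.1 = p.2)) = (Finset.Icc 2 n).image (fun a => (a, a)) by
      ext p
      simp only [Finset.mem_filter, Finset.mem_image, Finset.mem_Icc, hmemU]
      constructor
      · rintro ⟨hm, he⟩
        exact ⟨p.1, ⟨hm.1.1, hm.1.2⟩, by rw [Prod.ext_iff]; exact ⟨rfl, he⟩⟩
      · rintro ⟨a, ha, rfl⟩
        exact ⟨⟨⟨ha.1, ha.2⟩, ha.1, ha.2⟩, rfl⟩]
    rw [Finset.card_image_of_injective _ (fun a b h => (Prod.ext_iff.1 h).1), Nat.card_Icc]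
    omega
  have hcardG : (U.filter (fun p : ℕ × ℕ => p.2 < p.1)).card
      = (U.filter (fun p : ℕ × ℕ => p.1 < p.2)).card := by
    refine Finset.card_bij' (fun p _ => (p.2, p.1)) (fun p _ => (p.2, p.1)) ?_ ?_ ?_ ?_
    · intro p hp
      simp only [Finset.mem_filter, hmemU] at hp ⊢
      exact ⟨⟨hp.1.2, hp.1.1⟩, hp.2⟩
    · intro p hp
      simp only [Finset.mem_filter, hmemU] at hp ⊢
      exact ⟨⟨hp.1.2, hp.1.1⟩, hp.2⟩
    · intro p _; rfl
    · intro p _; rfl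
  rw [hD, hG] at hsplit2
  rw [← hsplit2] at hsplit1
  rw [hP]
  obtain ⟨m, rfl⟩ : ∃ m, n = m + 3 := ⟨n - 3, by omega⟩
  rw [show (m + 3 - 1) * (m + 3 - 2) = m * m + 3 * m + 2 by
    rw [show m + 3 - 1 = m + 2 by omega, show m + 3 - 2 = m + 1 by omega]; ring]
  rw [show (m + 3 - 1) * (m + 3 - 1) = m * m + 4 * m + 4 by
    rw [show m + 3 - 1 = m + 2 by omega]; ring] at hcardU
  rw [show m + 3 - 1 = m + 2 by omega] at hcardD
  generalize m * m = A at hcardU ⊢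
  omega

end count

/-- The number of distinct cubic MRS functions in `n ≥ 3` variables is
`(n² - 3n + 6)/6` if `3 ∣ n`, and `(n² - 3n + 2)/6` otherwise. -/
theorem card_cubicSet (n : ℕ) [NeZero n] (hn : 3 ≤ n) :
    (3 ∣ n → (cubicSet n).ncard = (n ^ 2 - 3 * n + 6) / 6) ∧
    (¬ 3 ∣ n → (cubicSet n).ncard = (n ^ 2 - 3 * n + 2) / 6) := by
  classical
  set F : ℕ × ℕ → BF n := fun p => cubicMRS n p.1 p.2 with hF
  set Q : Finset (BF n) := (Pfin n).image F with hQ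
  have hset : cubicSet n = ↑Q := by
    ext f
    simp only [cubicSet, Set.mem_setOf_eq, hQ, Finset.coe_image, Set.mem_image,
      Finset.mem_coe]
    constructor
    · rintro ⟨j, k, h1, h2, h3, rfl⟩
      exact ⟨(j, k), mem_Pfin.2 ⟨h1, h2, h3⟩, rfl⟩
    · rintro ⟨p, hp, rfl⟩
      rw [mem_Pfin] at hp
      exact ⟨p.1, p.2, hp.1, hp.2.1, hp.2.2, rfl⟩
  have hncard : (cubicSet n).ncard = Q.card := by rw [hset, Set.ncard_coe_finset]
  have hrho3 : ∀ p ∈ Pfin n, rho n (rho n (rho n p)) = p := by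
    intro p hp
    have hp' := mem_Pfin.1 hp
    obtain ⟨j, k⟩ := p
    simp only [rho, Prod.mk.injEq]
    simp only at hp'
    constructor <;> omega
  have hrhoP : ∀ p ∈ Pfin n, rho n p ∈ Pfin n := by
    intro p hp
    have hp' := mem_Pfin.1 hp
    rw [mem_Pfin]
    simp only [rho]
    omega
  have hfib : ∀ p ∈ Pfin n,
      (Pfin n).filter (fun q => F q = F p) = {p, rho n p, rho n (rho n p)} := by
    intro p hp
    have hp' := mem_Pfin.1 hp
    have hr1 := hrhoP p hp
    have hr2 := hrhoP _ hr1
    have hr1' := mem_Pfin.1 hr1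
    have hr2' := mem_Pfin.1 hr2
    ext q
    simp only [Finset.mem_filter, Finset.mem_insert, Finset.mem_singleton]
    constructor
    · rintro ⟨hq, he⟩
      have hq' := mem_Pfin.1 hq
      simp only [hF] at he
      exact (F_eq_iff hn hp' hq').1 he.symm
    · rintro (rfl | he | he)
      · exact ⟨hp, rfl⟩
      · subst he
        refine ⟨hr1, ?_⟩
        simp only [hF]
        exact ((F_eq_iff hn hp' hr1').2 (Or.inr (Or.inl rfl))).symm
      · subst he
        refine ⟨hr2, ?_⟩
        simp only [hF]
        exact ((F_eq_iff hn hp' hr2').2 (Or.inr (Or.inr rfl))).symm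
  have key := Finset.card_eq_sum_card_image F (Pfin n)
  rw [← hQ] at key
  have hOcard : ∀ p ∈ Pfin n, p ≠ rho n p →
      ({p, rho n p, rho n (rho n p)} : Finset (ℕ × ℕ)).card = 3 := by
    intro p hp hne
    have h3 := hrho3 p hp
    have hne2 : rho n p ≠ rho n (rho n p) := by
      intro e
      have h4 := congrArg (rho n) e
      rw [h3] at h4
      exact hne (by rw [e, h4])
    have hne3 : p ≠ rho n (rho n p) := by
      intro e
      have h4 := congrArg (rho n) e
      rw [h3] at h4
      exact hne h4.symm
    rw [Finset.card_insert_of_notMem, Finset.card_insert_of_notMem, Finset.card_singleton]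
    · simpa using hne2
    · simp only [Finset.mem_insert, Finset.mem_singleton, not_or]
      exact ⟨hne, hne3⟩
  have h2P := two_mul_card_Pfin (n := n) hn
  constructor
  · intro h3n
    set p₀ : ℕ × ℕ := (n / 3 + 1, 2 * (n / 3) + 1) with hp₀def
    have hp₀ : p₀ ∈ Pfin n := by
      rw [mem_Pfin]
      simp only [hp₀def]
      omega
    have hfix : rho n p₀ = p₀ := by
      simp only [hp₀def, rho, Prod.mk.injEq]
      constructor <;> omega
    have hf₀ : F p₀ ∈ Q := by rw [hQ]; exact Finset.mem_image_of_mem F hp₀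
    have hfib₀ : (Pfin n).filter (fun q => F q = F p₀) = {p₀} := by
      rw [hfib p₀ hp₀]
      simp [hfix]
    have hfibother : ∀ b ∈ Q, b ≠ F p₀ →
        ((Pfin n).filter (fun q => F q = b)).card = 3 := by
      intro b hb hbne
      obtain ⟨p, hp, rfl⟩ := Finset.mem_image.1 (by rw [hQ] at hb; exact hb)
      rw [hfib p hp]
      apply hOcard p hp
      intro he
      apply hbne
      have hp' := mem_Pfin.1 hp
      have hpp : p = p₀ := by
        obtain ⟨j, k⟩ := p
        rw [Prod.ext_iff] at he
        simp only [rho] at he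
        simp only at hp'
        simp only [hp₀def, Prod.mk.injEq]
        omega
      rw [hpp]
    rw [← Finset.insert_erase hf₀, Finset.sum_insert (Finset.notMem_erase _ _)] at key
    have e₀ : ((Pfin n).filter (fun a => F a = F p₀)).card = 1 := by
      rw [hfib₀]
      rfl
    have esum : ∑ b ∈ Q.erase (F p₀), ((Pfin n).filter (fun a => F a = b)).card
        = (Q.erase (F p₀)).card * 3 := by
      rw [Finset.sum_congr rfl
        (fun b hb => hfibother b (Finset.mem_of_mem_erase hb) (Finset.ne_of_mem_erase hb))]
      rw [Finset.sum_const, smul_eq_mul]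
    rw [e₀, esum, Finset.card_erase_of_mem hf₀] at key
    have hQpos : 1 ≤ Q.card := Finset.card_pos.2 ⟨_, hf₀⟩
    rw [hncard]
    obtain ⟨m, hm⟩ : ∃ m, n = m + 3 := ⟨n - 3, by omega⟩
    subst hm
    rw [show (m + 3 - 1) * (m + 3 - 2) = m * m + 3 * m + 2 by
      rw [show m + 3 - 1 = m + 2 by omega, show m + 3 - 2 = m + 1 by omega]; ring] at h2P
    rw [show (m + 3) ^ 2 = m * m + 6 * m + 9 by ring]
    generalize m * m = A at h2P ⊢
    omega
  · intro h3n
    have hallfib : ∀ b ∈ Q, ((Pfin n).filter (fun a => F a = b)).card = 3 := by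
      intro b hb
      obtain ⟨p, hp, rfl⟩ := Finset.mem_image.1 (by rw [hQ] at hb; exact hb)
      rw [hfib p hp]
      apply hOcard p hp
      intro he
      apply h3n
      have hp' := mem_Pfin.1 hp
      obtain ⟨j, k⟩ := p
      rw [Prod.ext_iff] at he
      simp only [rho] at he
      simp only at hp'
      omega
    rw [Finset.sum_congr rfl hallfib, Finset.sum_const, smul_eq_mul] at key
    rw [hncard]
    obtain ⟨m, hm⟩ : ∃ m, n = m + 3 := ⟨n - 3, by omega⟩
    subst hm
    rw [show (m + 3 - 1) * (m + 3 - 2) = m * m + 3 * m + 2 by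
      rw [show m + 3 - 1 = m + 2 by omega, show m + 3 - 2 = m + 1 by omega]; ring] at h2P
    rw [show (m + 3) ^ 2 = m * m + 6 * m + 9 by ring]
    generalize m * m = A at h2P ⊢
    omega
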